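/- Let A = {0,1,4} and n = 5. Then [1, 5/4] ⊆ C_{A,5} + C_{A,5}. Consequently C_{A,5} + C_{A,5} contains an interval but is not equal to [0,2], so it consists of infinitely many maximal intervals and infinitely many maximal gaps. -/

import Mathlib

open Pointwise

def linCantor (n : ℕ) (A : Set ℕ) : Set ℝ :=
  {x | ∃ a : ℕ → ℕ, (∀ i, a i ∈ A) ∧ x = ∑' i : ℕ, (a i : ℝ) / n ^ (i + 1)}

/-- `[a,b]` is a maximal (nondegenerate closed) interval of `S`. -/
def IsMaxInterval (S : Set ℝ) (a b : ℝ) : Prop :=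
  a < b ∧ Set.Icc a b ⊆ S ∧
    ∀ a' b' : ℝ, a' ≤ a → b ≤ b' → Set.Icc a' b' ⊆ S → a' = a ∧ b' = b

/-- `(a,b)` is a maximal gap of `S` within `[0,2]`. -/
def IsMaxGap (S : Set ℝ) (a b : ℝ) : Prop :=
  a < b ∧ Set.Ioo a b ∩ S = ∅ ∧
    ∀ a' b' : ℝ, a' ≤ a → b ≤ b' → a' < b' → Set.Ioo a' b' ∩ S = ∅ →
      (0 : ℝ) ≤ a' → b' ≤ 2 → a' = a ∧ b' = b

namespace S014
open Set Pointwise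

noncomputable section




abbrev CA : Set ℝ := linCantor 5 {0, 1, 4}
abbrev SS : Set ℝ := CA + CA

lemma summable_digits (a : ℕ → ℕ) (M : ℕ) (h : ∀ i, a i ≤ M) :
    Summable (fun i => (a i : ℝ) / 5 ^ (i + 1)) := by
  have hgeom : Summable (fun i : ℕ => (M : ℝ) * (1/5)^i) :=
    (summable_geometric_of_lt_one (by norm_num) (by norm_num)).mul_left _
  refine Summable.of_nonneg_of_le (fun i => by positivity) ?_ hgeom
  intro i
  have h1 : (a i : ℝ) / 5 ^ (i+1) ≤ (M:ℝ) / 5 ^ (i+1) := by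
    gcongr
    exact_mod_cast h i
  have h2 : (M:ℝ) / 5 ^ (i+1) ≤ (M:ℝ) / 5 ^ i := by
    apply div_le_div_of_nonneg_left (by positivity) (by positivity)
    apply pow_le_pow_right₀ (by norm_num) (by omega)
  calc (a i : ℝ) / 5 ^ (i+1) ≤ (M:ℝ) / 5 ^ i := le_trans h1 h2
  _ = (M:ℝ) * (1/5)^i := by rw [one_div, inv_pow]; ring

lemma tsum_const_digit (c : ℝ) : ∑' i : ℕ, c / 5 ^ (i + 1) = c / 4 := by
  have : (fun i : ℕ => c / 5 ^ (i + 1)) = fun i : ℕ => (c/5 : ℝ) * (1/5)^i := by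
    funext i
    rw [one_div, inv_pow, pow_succ]
    field_simp
  rw [this, tsum_mul_left, tsum_geometric_of_lt_one (by norm_num) (by norm_num)]
  norm_num
  ring

lemma mem_triple {m : ℕ} (h : m ∈ ({0,1,4} : Set ℕ)) : m = 0 ∨ m = 1 ∨ m = 4 := by
  simpa [Set.mem_insert_iff, Set.mem_singleton_iff] using h

lemma digits_le_4 {a : ℕ → ℕ} (h : ∀ i, a i ∈ ({0,1,4} : Set ℕ)) : ∀ i, a i ≤ 4 := by
  intro i; rcases mem_triple (h i) with h'|h'|h' <;> omega

lemma CA_subset_Icc : CA ⊆ Icc (0:ℝ) 1 := by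
  rintro x ⟨a, ha, rfl⟩
  have hb := digits_le_4 ha
  have hs := summable_digits a 4 hb
  have h4 : Summable (fun i : ℕ => (4 : ℝ) / 5 ^ (i+1)) := by
    have := summable_digits (fun _ => 4) 4 (fun _ => le_refl _)
    simpa using this
  constructor
  · apply tsum_nonneg; intro i; positivity
  · have hle : ∀ i : ℕ, (a i : ℝ)/5^(i+1) ≤ (4:ℝ)/5^(i+1) := by
      intro i; gcongr; exact_mod_cast hb i
    calc ∑' i : ℕ, (a i : ℝ) / (5:ℝ)^(i+1) ≤ ∑' i : ℕ, (4:ℝ)/5^(i+1) :=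
          Summable.tsum_le_tsum hle hs h4
    _ = 1 := by rw [tsum_const_digit 4]; norm_num

lemma SS_subset_Icc : SS ⊆ Icc (0:ℝ) 2 := by
  rintro x ⟨y, hy, z, hz, rfl⟩
  have h1 := CA_subset_Icc hy
  have h2 := CA_subset_Icc hz
  simp only [mem_Icc] at h1 h2 ⊢
  constructor <;> [linarith [h1.1, h2.1]; linarith [h1.2, h2.2]]



def valN (l : List ℕ) : ℕ := l.foldl (fun a c => 5 * a + c) 0
def valZ (l : List ℤ) : ℤ := l.foldl (fun a c => 5 * a + c) 0

lemma foldl_shiftN (l : List ℕ) (a : ℕ) :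
    l.foldl (fun a c => 5 * a + c) a = a * 5 ^ l.length + valN l := by
  induction l generalizing a with
  | nil => simp [valN]
  | cons c t ih =>
    simp only [List.foldl_cons, List.length_cons, valN]
    rw [ih (5*a+c), ih (5*0+c)]
    ring

lemma valN_cons (c : ℕ) (l : List ℕ) : valN (c :: l) = c * 5 ^ l.length + valN l := by
  show List.foldl (fun a c => 5 * a + c) (5 * 0 + c) l = c * 5 ^ l.length + valN l
  rw [foldl_shiftN]
  ring

lemma foldl_shiftZ (l : List ℤ) (a : ℤ) :
    l.foldl (fun a c => 5 * a + c) a = a * 5 ^ l.length + valZ l := by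
  induction l generalizing a with
  | nil => simp [valZ]
  | cons c t ih =>
    simp only [List.foldl_cons, List.length_cons, valZ]
    rw [ih (5*a+c), ih (5*0+c)]
    ring

lemma valZ_cons (c : ℤ) (l : List ℤ) : valZ (c :: l) = c * 5 ^ l.length + valZ l := by
  show List.foldl (fun a c => 5 * a + c) (5 * 0 + c) l = c * 5 ^ l.length + valZ l
  rw [foldl_shiftZ]
  ring

lemma valZ_append (l : List ℤ) (u : ℤ) : valZ (l ++ [u]) = 5 * valZ l + u := by
  show (l ++ [u]).foldl (fun a c => 5 * a + c) 0 = _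
  rw [List.foldl_append]
  rfl

lemma sum_range_list (l : List ℕ) :
    ∑ i ∈ Finset.range l.length, ((l.getD i 0 : ℝ)) / 5 ^ (i+1) = (valN l : ℝ) / 5 ^ l.length := by
  induction l with
  | nil => simp [valN]
  | cons c t ih =>
    rw [List.length_cons, Finset.sum_range_succ']
    have e1 : ∀ i ∈ Finset.range t.length, ((c :: t).getD (i+1) 0 : ℝ) / 5^(i+1+1)
        = (1/5) * ((t.getD i 0 : ℝ) / 5^(i+1)) := by
      intro i _
      simp only [List.getD_cons_succ]
      rw [pow_succ]
      ring
    rw [Finset.sum_congr rfl e1, ← Finset.mul_sum, ih]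
    simp only [List.getD_cons_zero, valN_cons]
    push_cast
    rw [pow_succ]
    field_simp
    ring


lemma mem_CA_of_list (l : List ℕ) (h : ∀ c ∈ l, c ∈ ({0,1,4} : Set ℕ)) :
    (valN l : ℝ) / 5 ^ l.length ∈ linCantor 5 {0, 1, 4} := by
  refine ⟨fun i => l.getD i 0, ?_, ?_⟩
  · intro i
    show l.getD i 0 ∈ ({0,1,4} : Set ℕ)
    by_cases hi : i < l.length
    · rw [l.getD_eq_getElem 0 hi]
      exact h _ (l.getElem_mem hi)
    · rw [List.getD_eq_default _ _ (by omega)]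
      exact Or.inl rfl
  · have : ∑' i : ℕ, ((l.getD i 0 : ℝ)) / (5:ℕ) ^ (i+1)
        = ∑ i ∈ Finset.range l.length, ((l.getD i 0 : ℝ)) / 5 ^ (i+1) := by
      apply tsum_eq_sum
      intro b hb
      rw [List.getD_eq_default _ _ (by simpa using hb)]
      simp
    rw [this, sum_range_list]

-- the tsum in linCantor, with ℕ-cast base
lemma linCantor_mem_iff (x : ℝ) :
    x ∈ CA ↔ ∃ a : ℕ → ℕ, (∀ i, a i ∈ ({0,1,4} : Set ℕ)) ∧
      x = ∑' i : ℕ, (a i : ℝ) / 5 ^ (i + 1) := by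
  constructor
  · rintro ⟨a, ha, rfl⟩
    exact ⟨a, ha, by norm_num⟩
  · rintro ⟨a, ha, rfl⟩
    exact ⟨a, ha, by norm_num⟩

lemma shift_CA {x : ℝ} (hx : x ∈ CA) :
    ∃ (a₀ : ℕ) (r : ℝ), a₀ ∈ ({0,1,4} : Set ℕ) ∧ r ∈ CA ∧ x = ((a₀ : ℝ) + r) / 5 := by
  rw [linCantor_mem_iff] at hx
  obtain ⟨a, ha, rfl⟩ := hx
  have hsum := summable_digits a 4 (digits_le_4 ha)
  refine ⟨a 0, ∑' i : ℕ, (a (i+1) : ℝ) / 5 ^ (i+1), ha 0, ?_, ?_⟩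
  · rw [linCantor_mem_iff]
    exact ⟨fun i => a (i+1), fun i => ha (i+1), rfl⟩
  · rw [hsum.tsum_eq_zero_add]
    have : ∀ i : ℕ, (a (i+1) : ℝ) / 5 ^ (i+1+1) = (1/5) * ((a (i+1) : ℝ) / 5^(i+1)) := by
      intro i; rw [pow_succ]; ring
    rw [tsum_congr this, tsum_mul_left]
    field_simp
    ring

lemma unshift_CA {r : ℝ} (hr : r ∈ CA) (a₀ : ℕ) (ha₀ : a₀ ∈ ({0,1,4} : Set ℕ)) :
    ((a₀ : ℝ) + r) / 5 ∈ CA := by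
  rw [linCantor_mem_iff] at hr ⊢
  obtain ⟨a, ha, rfl⟩ := hr
  have hsum := summable_digits a 4 (digits_le_4 ha)
  refine ⟨fun i => Nat.rec a₀ (fun j _ => a j) i, ?_, ?_⟩
  · intro i
    cases i with
    | zero => exact ha₀
    | succ j => exact ha j
  · have hsum2 : Summable (fun i => ((Nat.rec a₀ (fun j _ => a j) i : ℕ) : ℝ) / 5 ^ (i+1)) := by
      apply summable_digits _ 4
      intro i
      cases i with
      | zero => rcases ha₀ with h|h|h <;> simp_all
      | succ j => exact digits_le_4 ha j
    rw [hsum2.tsum_eq_zero_add]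
    have : ∀ i : ℕ, ((Nat.rec a₀ (fun j _ => a j) (i+1) : ℕ) : ℝ) / 5 ^ (i+1+1)
        = (1/5) * ((a i : ℝ) / 5^(i+1)) := by
      intro i; show ((a i : ℝ)) / 5 ^ (i+1+1) = _; rw [pow_succ]; ring
    rw [tsum_congr this, tsum_mul_left]
    show _ = (a₀ : ℝ) / 5 ^ (0+1) + _
    field_simp
    ring

lemma SS_decomp {x : ℝ} (hx : x ∈ SS) :
    ∃ (c : ℕ) (r : ℝ), (c = 0 ∨ c = 1 ∨ c = 2 ∨ c = 4 ∨ c = 5 ∨ c = 8) ∧ r ∈ SS ∧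
      x = ((c : ℝ) + r) / 5 := by
  obtain ⟨y, hy, z, hz, rfl⟩ := hx
  obtain ⟨a₀, ry, ha₀, hry, hy'⟩ := shift_CA hy
  obtain ⟨b₀, rz, hb₀, hrz, hz'⟩ := shift_CA hz
  refine ⟨a₀ + b₀, ry + rz, ?_, ⟨ry, hry, rz, hrz, rfl⟩, ?_⟩
  · rcases ha₀ with h|h|h <;> rcases hb₀ with h'|h'|h' <;> simp_all
  · show y + z = _
    rw [hy', hz']
    push_cast
    ring

lemma div5_SS {x : ℝ} (hx : x ∈ SS) : x / 5 ∈ SS := by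
  obtain ⟨y, hy, z, hz, rfl⟩ := hx
  have h1 : ((0:ℕ) + y) / 5 ∈ CA := unshift_CA hy 0 (Or.inl rfl)
  have h2 : ((0:ℕ) + z) / 5 ∈ CA := unshift_CA hz 0 (Or.inl rfl)
  refine ⟨(0+y)/5, by simpa using h1, (0+z)/5, by simpa using h2, ?_⟩
  show (0+y)/5 + (0+z)/5 = (y+z)/5
  ring


instance : Finite ({0,1,4} : Set ℕ) := by
  apply Set.Finite.to_subtype
  exact (Set.finite_singleton 4).insert 1 |>.insert 0

lemma CA_compact : IsCompact CA := by
  have hfin : ∀ (v : ({0,1,4} : Set ℕ)), (v : ℕ) ≤ 4 := by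
    rintro ⟨v, hv⟩
    show v ≤ 4
    simp only [Set.mem_insert_iff, Set.mem_singleton_iff] at hv
    omega
  let Φ : (ℕ → ({0,1,4} : Set ℕ)) → ℝ := fun f => ∑' i : ℕ, ((f i : ℕ) : ℝ) / 5 ^ (i+1)
  have hΦ : Continuous Φ := by
    apply continuous_tsum (u := fun i => (4:ℝ) * (1/5)^(i+1))
    · intro i
      have : Continuous (fun f : (ℕ → ({0,1,4} : Set ℕ)) => f i) := continuous_apply i
      exact (continuous_of_discreteTopology (α := ({0,1,4} : Set ℕ))
        (f := fun v : ({0,1,4} : Set ℕ) => ((v:ℕ):ℝ)/5^(i+1))).comp this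
    · apply Summable.mul_left
      exact ((summable_geometric_of_lt_one (by norm_num) (by norm_num)).comp_injective
        (add_left_injective 1))
    · intro i f
      rw [Real.norm_eq_abs, abs_of_nonneg (by positivity)]
      rw [one_div, inv_pow, ← div_eq_mul_inv]
      gcongr
      exact_mod_cast hfin (f i)
  have : CA = Set.range Φ := by
    ext x
    constructor
    · rintro ⟨a, ha, rfl⟩
      refine ⟨fun i => ⟨a i, ha i⟩, ?_⟩
      show ∑' i : ℕ, ((a i :ℕ): ℝ) / 5 ^ (i+1) = _
      norm_num
    · rintro ⟨f, rfl⟩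
      refine ⟨fun i => (f i : ℕ), fun i => (f i).2, ?_⟩
      show Φ f = _
      norm_num
      rfl
  rw [this]
  exact isCompact_range hΦ

lemma SS_compact : IsCompact SS := CA_compact.add CA_compact
lemma SS_closed : IsClosed SS := SS_compact.isClosed


def memD (u : ℤ) : Prop := u = -4 ∨ u = -3 ∨ u = -2 ∨ u = 0 ∨ u = 1 ∨ u = 4

def Rep (n : ℕ) (m : ℤ) : Prop :=
  ∃ l : List ℤ, l.length = n ∧ (∀ u ∈ l, memD u) ∧ m = valZ l

lemma Rep_zero : Rep 0 0 := ⟨[], rfl, by simp, rfl⟩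

lemma Rep_append {n m} (h : Rep n m) {u : ℤ} (hu : memD u) : Rep (n+1) (5*m + u) := by
  obtain ⟨l, hl, hmem, rfl⟩ := h
  refine ⟨l ++ [u], by simp [hl], ?_, (valZ_append l u).symm⟩
  intro v hv
  rcases List.mem_append.1 hv with h|h
  · exact hmem v h
  · rcases List.mem_singleton.1 h with rfl; exact hu

lemma Rep_cons {n m} (h : Rep n m) {u : ℤ} (hu : memD u) : Rep (n+1) (u * 5^n + m) := by
  obtain ⟨l, hl, hmem, rfl⟩ := h
  refine ⟨u :: l, by simp [hl], ?_, by rw [valZ_cons, hl]⟩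
  intro v hv
  rcases List.mem_cons.1 hv with rfl|h
  · exact hu
  · exact hmem v h

lemma fract_shift (y : ℝ) (z : ℤ) : Int.fract (y + z) = Int.fract y := Int.fract_add_intCast y z

lemma step_case (σ σn : ℝ) (n : ℕ) (k₀ m' k k' u d : ℤ)
    (heq : (5:ℝ)^n * (σ + k₀) - m' = σn + k)
    (hu : (u:ℝ) = d + 5*k - k')
    (hfr : Int.fract ((5:ℝ)^(n+1) * σ) = 5*σn - d) :
    (5:ℝ)^(n+1) * (σ + k₀) - ((5*m' + u : ℤ) : ℝ) = Int.fract ((5:ℝ)^(n+1) * σ) + k' := by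
  rw [hfr]
  have h5 : (5:ℝ) * ((5:ℝ)^n * (σ + k₀)) - 5*m' = 5*σn + 5*k := by linarith
  push_cast
  rw [pow_succ]
  nlinarith [h5, hu]

lemma strong : ∀ n : ℕ, ∀ σ : ℝ, 0 ≤ σ → σ < 1 → ∀ k' : ℤ, (k' = 0 ∨ k' = -1) →
    ∃ (k₀ m : ℤ), (k₀ = 0 ∨ k₀ = -1) ∧ Rep n m ∧
      (5:ℝ)^n * (σ + k₀) - m = Int.fract ((5:ℝ)^n * σ) + k' := by
  intro n
  induction n with
  | zero =>
    intro σ h0 h1 k' hk'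
    refine ⟨k', 0, hk', Rep_zero, ?_⟩
    rw [Int.fract_eq_self.mpr ⟨by linarith, by linarith⟩]
    push_cast; ring
  | succ n ih =>
    intro σ h0 h1 k' hk'
    set σn := Int.fract ((5:ℝ)^n * σ) with hσn
    have hσn0 : 0 ≤ σn := Int.fract_nonneg _
    have hσn1 : σn < 1 := Int.fract_lt_one _
    set d : ℤ := ⌊(5:ℝ) * σn⌋ with hd
    have hd0 : 0 ≤ d := Int.floor_nonneg.mpr (by linarith)
    have hd4 : d ≤ 4 := by
      have : (5:ℝ) * σn < 5 := by linarith
      have h5 := Int.floor_lt.mpr (by exact_mod_cast this : (5:ℝ)*σn < ((5:ℤ):ℝ))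
      omega
    have hfr : Int.fract ((5:ℝ)^(n+1) * σ) = 5*σn - d := by
      have e1 : (5:ℝ)^(n+1) * σ = 5*σn + ((5 * ⌊(5:ℝ)^n * σ⌋ : ℤ) : ℝ) := by
        have : (5:ℝ)^n * σ = σn + (⌊(5:ℝ)^n * σ⌋ : ℝ) := by
          rw [hσn, Int.fract]; ring
        push_cast
        rw [pow_succ]
        nlinarith [this]
      rw [e1, fract_shift, Int.fract, ← hd]
    -- choose k and u
    have key : ∃ k u : ℤ, (k = 0 ∨ k = -1) ∧ memD u ∧ u = d + 5*k - k' := by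
      rcases hk' with rfl | rfl <;> interval_cases d
      · exact ⟨0, 0, Or.inl rfl, by norm_num [memD], by norm_num⟩
      · exact ⟨0, 1, Or.inl rfl, by norm_num [memD], by norm_num⟩
      · exact ⟨-1, -3, Or.inr rfl, by norm_num [memD], by norm_num⟩
      · exact ⟨-1, -2, Or.inr rfl, by norm_num [memD], by norm_num⟩
      · exact ⟨0, 4, Or.inl rfl, by norm_num [memD], by norm_num⟩
      · exact ⟨0, 1, Or.inl rfl, by norm_num [memD], by norm_num⟩
      · exact ⟨-1, -3, Or.inr rfl, by norm_num [memD], by norm_num⟩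
      · exact ⟨-1, -2, Or.inr rfl, by norm_num [memD], by norm_num⟩
      · exact ⟨0, 4, Or.inl rfl, by norm_num [memD], by norm_num⟩
      · exact ⟨-1, 0, Or.inr rfl, by norm_num [memD], by norm_num⟩
    obtain ⟨k, u, hk, huD, huval⟩ := key
    obtain ⟨k₀, m', hk₀, hRep, heq⟩ := ih σ h0 h1 k hk
    refine ⟨k₀, 5*m' + u, hk₀, Rep_append hRep huD, ?_⟩
    exact step_case σ σn n k₀ m' k k' u d heq (by exact_mod_cast congrArg (Int.cast : ℤ → ℝ) huval) hfr


lemma safe : ∀ n : ℕ, ∀ τ : ℝ, 0 ≤ τ → τ ≤ 1/4 →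
    ∃ (m k : ℤ), Rep n m ∧ (k = 0 ∨ k = -1) ∧
      (5:ℝ)^n * τ - m = Int.fract ((5:ℝ)^n * τ) + k := by
  intro n
  induction n with
  | zero =>
    intro τ h0 h1
    refine ⟨0, 0, Rep_zero, Or.inl rfl, ?_⟩
    rw [Int.fract_eq_self.mpr ⟨by linarith, by linarith⟩]
    push_cast; ring
  | succ n ih =>
    intro τ h0 h1
    set d : ℤ := ⌊(5:ℝ) * τ⌋ with hd
    have hd0 : 0 ≤ d := Int.floor_nonneg.mpr (by linarith)
    have hd1 : d ≤ 1 := by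
      have : (5:ℝ) * τ < 2 := by linarith
      have h5 := Int.floor_lt.mpr (by exact_mod_cast this : (5:ℝ)*τ < ((2:ℤ):ℝ))
      omega
    set τ' : ℝ := 5*τ - d with hτ'
    have hfd : (d:ℝ) ≤ 5*τ := by rw [hd]; exact Int.floor_le _
    have hfd2 : 5*τ < (d:ℝ) + 1 := by
      rw [hd]; exact Int.lt_floor_add_one _
    have hτ'0 : 0 ≤ τ' := by rw [hτ']; linarith
    have hτ'1 : τ' < 1 := by rw [hτ']; linarith
    have hfr : ∀ m : ℤ, Int.fract ((5:ℝ)^(n+1) * τ) = Int.fract ((5:ℝ)^n * τ') := by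
      intro m
      have e1 : (5:ℝ)^(n+1) * τ = (5:ℝ)^n * τ' + ((d * 5^n : ℤ) : ℝ) := by
        push_cast
        rw [pow_succ, hτ']
        ring
      rw [e1, fract_shift]
    -- three cases
    rcases le_or_gt τ' (1/4) with hsmall | hbig
    · -- use SAFE ih at τ'
      obtain ⟨m', k, hRep, hk, heq⟩ := ih τ' hτ'0 hsmall
      refine ⟨d * 5^n + m', k, ?_, hk, ?_⟩
      · have hDd : memD d := by
          rcases (by omega : d = 0 ∨ d = 1) with h | h <;> rw [h] <;> simp [memD]
        exact Rep_cons hRep hDd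
      · rw [hfr 0]
        push_cast
        rw [pow_succ]
        have : (5:ℝ)^n * τ' - m' = Int.fract ((5:ℝ)^n * τ') + k := heq
        rw [hτ'] at this
        push_cast at this
        nlinarith [this]
    · -- τ' > 1/4 : this forces d = 0 (since τ ≤ 1/4, if d = 1 then τ' = 5τ-1 ≤ 1/4)
      have hdzero : d = 0 := by
        rcases (by omega : d = 0 ∨ d = 1) with h | h
        · exact h
        · exfalso
          rw [h] at hτ'
          have : τ' ≤ 1/4 := by rw [hτ']; push_cast; linarith
          linarith
      obtain ⟨k₀, m', hk₀, hRep, heq⟩ := strong n τ' hτ'0 hτ'1 0 (Or.inl rfl)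
      refine ⟨(-k₀) * 5^n + m', 0, ?_, Or.inl rfl, ?_⟩
      · have hD : memD (-k₀) := by
          rcases hk₀ with rfl | rfl
          · exact Or.inr (Or.inr (Or.inr (Or.inl rfl)))
          · exact Or.inr (Or.inr (Or.inr (Or.inr (Or.inl rfl))))
        exact Rep_cons hRep hD
      · rw [hfr 0]
        have heq' : (5:ℝ)^n * (τ' + k₀) - m' = Int.fract ((5:ℝ)^n * τ') + 0 := by
          exact_mod_cast heq
        rw [hτ', hdzero] at heq'
        push_cast at heq' ⊢
        rw [pow_succ]
        rw [hτ', hdzero]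
        push_cast
        nlinarith [heq']

def fd (c : ℕ) : ℕ := if 4 ≤ c then 4 else if 1 ≤ c then 1 else 0
def gd (c : ℕ) : ℕ := c - fd c

lemma valN_map_add4 (l : List ℤ) (h : ∀ u ∈ l, memD u) :
    (valN (l.map fun u => (u+4).toNat) : ℤ) = valZ l + 5 ^ l.length - 1 := by
  induction l with
  | nil => simp [valN, valZ]
  | cons u t ih =>
    have hu := h u List.mem_cons_self
    have ht := fun v hv => h v (List.mem_cons_of_mem u hv)
    have h4 : ((u+4).toNat : ℤ) = u + 4 := by
      rcases hu with rfl|rfl|rfl|rfl|rfl|rfl <;> norm_num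
    simp only [List.map_cons, valN_cons, valZ_cons, List.length_map, List.length_cons]
    push_cast
    rw [h4, ih ht]
    ring

lemma valN_split (l : List ℕ) : valN (l.map fd) + valN (l.map gd) = valN l := by
  induction l with
  | nil => simp [valN]
  | cons c t ih =>
    simp only [List.map_cons, valN_cons, List.length_map]
    have hc : fd c + gd c = c := by
      simp only [gd, fd]
      split_ifs <;> omega
    have h2 : (fd c + gd c) * 5^t.length = c * 5^t.length := by rw [hc]
    rw [Nat.add_mul] at h2
    omega

lemma approx (τ : ℝ) (h0 : 0 ≤ τ) (h1 : τ ≤ 1/4) (n : ℕ) :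
    ∃ P ∈ SS, 0 ≤ (1 + τ) - P ∧ (1 + τ) - P ≤ 2/5^n := by
  obtain ⟨m, k, ⟨l, hlen, hmem, rfl⟩, hk, heq⟩ := safe n τ h0 h1
  set lN := l.map (fun u => (u+4).toNat) with hlN
  have hlNlen : lN.length = n := by rw [hlN, List.length_map, hlen]
  have hB6 : ∀ c ∈ lN, c = 0 ∨ c = 1 ∨ c = 2 ∨ c = 4 ∨ c = 5 ∨ c = 8 := by
    intro c hc
    rw [hlN] at hc
    obtain ⟨u, hu, rfl⟩ := List.mem_map.1 hc
    rcases hmem u hu with rfl|rfl|rfl|rfl|rfl|rfl <;> simp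
  have hf : ∀ c ∈ lN.map fd, c ∈ ({0,1,4} : Set ℕ) := by
    intro c hc
    obtain ⟨c', hc', rfl⟩ := List.mem_map.1 hc
    rcases hB6 c' hc' with rfl|rfl|rfl|rfl|rfl|rfl <;> simp [fd]
  have hg : ∀ c ∈ lN.map gd, c ∈ ({0,1,4} : Set ℕ) := by
    intro c hc
    obtain ⟨c', hc', rfl⟩ := List.mem_map.1 hc
    rcases hB6 c' hc' with rfl|rfl|rfl|rfl|rfl|rfl <;> simp [fd, gd]
  have hy := mem_CA_of_list (lN.map fd) hf
  have hz := mem_CA_of_list (lN.map gd) hg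
  rw [List.length_map, hlNlen] at hy hz
  refine ⟨_, ⟨_, hy, _, hz, rfl⟩, ?_, ?_⟩
  · -- 0 ≤ 1 + τ - (y + z)
    have hval : (valN (lN.map fd) : ℝ) + (valN (lN.map gd) : ℝ) = ((valZ l : ℝ) + 5^n - 1) := by
      have h1 := valN_split lN
      have h2 := valN_map_add4 l hmem
      rw [← hlN] at h2
      have : ((valN (lN.map fd) + valN (lN.map gd) : ℕ) : ℤ) = valZ l + 5^l.length - 1 := by
        rw [h1]; exact h2
      rw [hlen] at this
      exact_mod_cast this
    have hfr0 : (0:ℝ) ≤ Int.fract ((5:ℝ)^n * τ) := Int.fract_nonneg _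
    have hfr1 : Int.fract ((5:ℝ)^n * τ) < 1 := Int.fract_lt_one _
    have hkbound : -1 ≤ (k:ℝ) ∧ (k:ℝ) ≤ 0 := by
      rcases hk with rfl|rfl <;> norm_num
    have h5n : (0:ℝ) < 5^n := by positivity
    have expand : (1 + τ) - ((valN (lN.map fd) : ℝ)/5^n + (valN (lN.map gd) : ℝ)/5^n)
        = (Int.fract ((5:ℝ)^n * τ) + k + 1)/5^n := by
      rw [← add_div, hval]
      field_simp
      rw [mul_comm τ ((5:ℝ)^n)]
      linarith [heq]
    rw [expand]
    apply div_nonneg _ (le_of_lt h5n)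
    linarith [hkbound.1]
  · have hfr0 : (0:ℝ) ≤ Int.fract ((5:ℝ)^n * τ) := Int.fract_nonneg _
    have hfr1 : Int.fract ((5:ℝ)^n * τ) < 1 := Int.fract_lt_one _
    have hkbound : -1 ≤ (k:ℝ) ∧ (k:ℝ) ≤ 0 := by
      rcases hk with rfl|rfl <;> norm_num
    have h5n : (0:ℝ) < 5^n := by positivity
    have hval : (valN (lN.map fd) : ℝ) + (valN (lN.map gd) : ℝ) = ((valZ l : ℝ) + 5^n - 1) := by
      have h1 := valN_split lN
      have h2 := valN_map_add4 l hmem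
      rw [← hlN] at h2
      have : ((valN (lN.map fd) + valN (lN.map gd) : ℕ) : ℤ) = valZ l + 5^l.length - 1 := by
        rw [h1]; exact h2
      rw [hlen] at this
      exact_mod_cast this
    have expand : (1 + τ) - ((valN (lN.map fd) : ℝ)/5^n + (valN (lN.map gd) : ℝ)/5^n)
        = (Int.fract ((5:ℝ)^n * τ) + k + 1)/5^n := by
      rw [← add_div, hval]
      field_simp
      rw [mul_comm τ ((5:ℝ)^n)]
      linarith [heq]
    rw [expand]
    rw [div_le_div_iff₀ h5n h5n]
    nlinarith [hfr1, hkbound.2, h5n]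

lemma part1 : Icc (1:ℝ) (5/4) ⊆ SS := by
  intro x hx
  obtain ⟨hx1, hx2⟩ := hx
  rw [← SS_closed.closure_eq, Metric.mem_closure_iff]
  intro ε hε
  obtain ⟨n, hn⟩ := exists_pow_lt_of_lt_one (show (0:ℝ) < ε/2 by linarith)
    (show (1/5:ℝ) < 1 by norm_num)
  obtain ⟨P, hP, hge, hle⟩ := approx (x-1) (by linarith) (by linarith) n
  rw [show (1:ℝ) + (x-1) = x by ring] at hge hle
  refine ⟨P, hP, ?_⟩
  rw [Real.dist_eq, abs_of_nonneg hge]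
  have h2 : (2:ℝ)/5^n = 2*(1/5)^n := by
    rw [one_div, inv_pow]; ring
  rw [h2] at hle
  linarith

lemma gap_top : ∀ k : ℕ, ∀ x ∈ SS, x ∉ Ioo (2 - 3/5^(k+1)) (2 - 2/5^(k+1)) := by
  intro k
  induction k with
  | zero =>
    rintro x hx ⟨hlo, hhi⟩
    obtain ⟨c, r, hc, hr, rfl⟩ := SS_decomp hx
    obtain ⟨hr0, hr2⟩ := SS_subset_Icc hr
    norm_num at hlo hhi
    rcases hc with rfl|rfl|rfl|rfl|rfl|rfl <;> push_cast at hlo hhi <;> linarith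
  | succ k ih =>
    rintro x hx ⟨hlo, hhi⟩
    obtain ⟨c, r, hc, hr, rfl⟩ := SS_decomp hx
    obtain ⟨hr0, hr2⟩ := SS_subset_Icc hr
    have hq : (0:ℝ) < 5^(k+1) := by positivity
    have hq5 : (5:ℝ) ≤ 5^(k+1) := by
      calc (5:ℝ) = 5^1 := (pow_one 5).symm
      _ ≤ 5^(k+1) := by apply pow_le_pow_right₀ (by norm_num) (by omega)
    have h3q : (3:ℝ)/5^(k+1) ≤ 3/5 := by
      rw [div_le_div_iff₀ hq (by norm_num)]
      nlinarith
    have e2 : (2:ℝ)/5^(k+1+1) * 5 = 2/5^(k+1) := by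
      rw [pow_succ]; field_simp
    have e3 : (3:ℝ)/5^(k+1+1) * 5 = 3/5^(k+1) := by
      rw [pow_succ]; field_simp
    -- 5x = c + r
    have hlo' : 10 - 3/5^(k+1) < (c:ℝ) + r := by nlinarith
    have hhi' : (c:ℝ) + r < 10 - 2/5^(k+1) := by nlinarith
    have h3q0 : (0:ℝ) < 3/5^(k+1) := by positivity
    have h2q0 : (0:ℝ) < 2/5^(k+1) := by positivity
    rcases hc with rfl|rfl|rfl|rfl|rfl|rfl <;> push_cast at hlo' hhi'
    · linarith
    · linarith
    · linarith
    · linarith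
    · linarith
    · exact ih r hr ⟨by linarith, by linarith⟩

lemma not_mem_u : ∀ k : ℕ, ((7:ℝ)/10)/5^k ∉ SS := by
  intro k
  induction k with
  | zero =>
    intro hx
    obtain ⟨c, r, hc, hr, hxe⟩ := SS_decomp hx
    obtain ⟨hr0, hr2⟩ := SS_subset_Icc hr
    norm_num at hxe
    have hcr : (c:ℝ) + r = 7/2 := by linarith
    rcases hc with rfl|rfl|rfl|rfl|rfl|rfl <;> push_cast at hcr
    · linarith
    · linarith
    · exact gap_top 0 r hr ⟨by norm_num; linarith, by norm_num; linarith⟩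
    · linarith
    · linarith
    · linarith
  | succ k ih =>
    intro hx
    obtain ⟨c, r, hc, hr, hxe⟩ := SS_decomp hx
    obtain ⟨hr0, hr2⟩ := SS_subset_Icc hr
    have hq : (0:ℝ) < 5^k := by positivity
    have hq1 : (1:ℝ) ≤ 5^k := by
      calc (1:ℝ) = 1^k := (one_pow k).symm
      _ ≤ 5^k := by apply pow_le_pow_left₀ <;> norm_num
    have hcr : (c:ℝ) + r = (7/10)/5^k := by
      rw [pow_succ] at hxe
      field_simp at hxe ⊢
      linarith
    have hsmall : (7/10:ℝ)/5^k ≤ 7/10 := by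
      rw [div_le_iff₀ hq]
      nlinarith
    have hc0 : c = 0 := by
      rcases hc with rfl|rfl|rfl|rfl|rfl|rfl <;> push_cast at hcr <;> first | rfl | (exfalso; linarith)
    subst hc0
    push_cast at hcr
    have hre : r = (7/10:ℝ)/5^k := by linarith
    exact ih (hre ▸ hr)

lemma mem_CA_endpoint (k : ℕ) : (1 - 1/5^k : ℝ) ∈ CA := by
  have hval : ∀ k : ℕ, valN (List.replicate k 4) = 5^k - 1 := by
    intro k
    induction k with
    | zero => simp [valN]
    | succ k ih =>
      rw [List.replicate_succ, valN_cons, List.length_replicate, ih]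
      have : (1:ℕ) ≤ 5^k := Nat.one_le_pow _ _ (by norm_num)
      rw [pow_succ]
      omega
  have hmem := mem_CA_of_list (List.replicate k 4) (by
    intro c hc
    rw [List.eq_of_mem_replicate hc]
    simp)
  rw [hval, List.length_replicate] at hmem
  have h1 : (1:ℝ) ≤ 5^k := by
    calc (1:ℝ) = 1^k := (one_pow k).symm
    _ ≤ 5^k := by apply pow_le_pow_left₀ <;> norm_num
  have : ((5^k - 1 : ℕ) : ℝ) / 5^k = 1 - 1/5^k := by
    have : ((5^k - 1 : ℕ) : ℝ) = 5^k - 1 := by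
      push_cast [Nat.cast_sub (Nat.one_le_pow k 5 (by norm_num))]
      norm_num
    rw [this]
    field_simp
  rwa [this] at hmem

lemma mem_s (k : ℕ) : (2 - 2/5^k : ℝ) ∈ SS := by
  have h := mem_CA_endpoint k
  exact ⟨_, h, _, h, by ring⟩

lemma Ik_subset : ∀ k : ℕ, Icc ((1:ℝ)/5^k) ((5/4)/5^k) ⊆ SS := by
  intro k
  induction k with
  | zero => simpa using part1
  | succ k ih =>
    rintro x ⟨hlo, hhi⟩
    have hq : (0:ℝ) < 5^k := by positivity
    have h5x : 5*x ∈ Icc ((1:ℝ)/5^k) ((5/4)/5^k) := by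
      rw [pow_succ] at hlo hhi
      have hlo2 : (1:ℝ) ≤ x * (5^k*5) := (div_le_iff₀ (by positivity)).mp hlo
      have hhi2 : x * (5^k*5) ≤ 5/4 := (le_div_iff₀ (by positivity)).mp hhi
      constructor
      · rw [div_le_iff₀ hq]; nlinarith
      · rw [le_div_iff₀ hq]; nlinarith
    have := div5_SS (ih h5x)
    rwa [show 5*x/5 = x by ring] at this


lemma exists_maxInterval {S : Set ℝ} (hcl : IsClosed S) (hbd : S ⊆ Icc 0 2)
    {a b : ℝ} (hab : a < b) (hI : Icc a b ⊆ S) :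
    ∃ a' b', a' ≤ a ∧ b ≤ b' ∧ IsMaxInterval S a' b' := by
  classical
  set L : Set ℝ := {t | t ≤ a ∧ Icc t b ⊆ S} with hL
  have haL : a ∈ L := ⟨le_refl a, hI⟩
  have hLne : L.Nonempty := ⟨a, haL⟩
  have hLsub : L ⊆ S := by
    rintro t ⟨ht1, ht2⟩
    exact ht2 ⟨le_refl t, by linarith⟩
  have hLbdd : BddBelow L := ⟨0, fun t ht => (hbd (hLsub ht)).1⟩
  set A := sInf L with hA
  have hAa : A ≤ a := csInf_le hLbdd haL
  have hAS : A ∈ S := by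
    have := csInf_mem_closure hLne hLbdd
    rw [← hcl.closure_eq]
    exact closure_mono hLsub this
  set R : Set ℝ := {t | b ≤ t ∧ Icc a t ⊆ S} with hR
  have hbR : b ∈ R := ⟨le_refl b, hI⟩
  have hRne : R.Nonempty := ⟨b, hbR⟩
  have hRsub : R ⊆ S := by
    rintro t ⟨ht1, ht2⟩
    exact ht2 ⟨by linarith, le_refl t⟩
  have hRbdd : BddAbove R := ⟨2, fun t ht => (hbd (hRsub ht)).2⟩
  set B := sSup R with hB
  have hbB : b ≤ B := le_csSup hRbdd hbR
  have hBS : B ∈ S := by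
    have := csSup_mem_closure hRne hRbdd
    rw [← hcl.closure_eq]
    exact closure_mono hRsub this
  have hIcc : Icc A B ⊆ S := by
    rintro x ⟨hx1, hx2⟩
    rcases eq_or_lt_of_le hx1 with rfl | hx1'
    · exact hAS
    rcases le_or_gt x b with hxb | hxb
    · obtain ⟨t, htL, htx⟩ := exists_lt_of_csInf_lt hLne hx1'
      exact htL.2 ⟨le_of_lt htx, hxb⟩
    rcases eq_or_lt_of_le hx2 with rfl | hx2'
    · exact hBS
    obtain ⟨t, htR, htx⟩ := exists_lt_of_lt_csSup hRne hx2'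
    exact htR.2 ⟨by linarith, le_of_lt htx⟩
  refine ⟨A, B, hAa, hbB, by linarith, hIcc, ?_⟩
  intro a' b' ha' hb' hsub
  constructor
  · have ha'L : a' ∈ L := ⟨by linarith, fun x hx => hsub ⟨hx.1, by linarith [hx.2]⟩⟩
    have := csInf_le hLbdd ha'L
    linarith [this, ha']
  · have hb'R : b' ∈ R := ⟨by linarith, fun x hx => hsub ⟨by linarith [hx.1], hx.2⟩⟩
    have := le_csSup hRbdd hb'R
    linarith [this, hb']

lemma exists_maxGap {S : Set ℝ} {a b : ℝ} (h0 : 0 ≤ a) (hab : a < b) (hb2 : b ≤ 2)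
    (hgap : Ioo a b ∩ S = ∅) :
    ∃ a' b', a' ≤ a ∧ b ≤ b' ∧ IsMaxGap S a' b' := by
  classical
  set L : Set ℝ := {t | 0 ≤ t ∧ t ≤ a ∧ Ioo t b ∩ S = ∅} with hL
  have haL : a ∈ L := ⟨h0, le_refl a, hgap⟩
  have hLne : L.Nonempty := ⟨a, haL⟩
  have hLbdd : BddBelow L := ⟨0, fun t ht => ht.1⟩
  set A := sInf L with hA
  have hAa : A ≤ a := csInf_le hLbdd haL
  set R : Set ℝ := {t | b ≤ t ∧ t ≤ 2 ∧ Ioo a t ∩ S = ∅} with hR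
  have hbR : b ∈ R := ⟨le_refl b, hb2, hgap⟩
  have hRne : R.Nonempty := ⟨b, hbR⟩
  have hRbdd : BddAbove R := ⟨2, fun t ht => ht.2.1⟩
  set B := sSup R with hB
  have hbB : b ≤ B := le_csSup hRbdd hbR
  have hgap' : Ioo A B ∩ S = ∅ := by
    rw [eq_empty_iff_forall_notMem]
    rintro x ⟨⟨hx1, hx2⟩, hxS⟩
    rcases lt_or_ge x b with hxb | hxb
    · obtain ⟨t, htL, htx⟩ := exists_lt_of_csInf_lt hLne hx1
      have : x ∈ Ioo t b ∩ S := ⟨⟨htx, hxb⟩, hxS⟩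
      rw [htL.2.2] at this
      exact this
    · obtain ⟨t, htR, htx⟩ := exists_lt_of_lt_csSup hRne hx2
      have : x ∈ Ioo a t ∩ S := ⟨⟨by linarith, htx⟩, hxS⟩
      rw [htR.2.2] at this
      exact this
  refine ⟨A, B, hAa, hbB, by linarith, hgap', ?_⟩
  intro a' b' ha' hb' hab' hgap'' h0' hb2'
  constructor
  · have ha'L : a' ∈ L := by
      refine ⟨h0', by linarith, ?_⟩
      rw [eq_empty_iff_forall_notMem]
      rintro x ⟨⟨hx1, hx2⟩, hxS⟩
      rw [eq_empty_iff_forall_notMem] at hgap''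
      exact hgap'' x ⟨⟨hx1, by linarith⟩, hxS⟩
    have := csInf_le hLbdd ha'L
    linarith
  · have hb'R : b' ∈ R := by
      refine ⟨by linarith, hb2', ?_⟩
      rw [eq_empty_iff_forall_notMem]
      rintro x ⟨⟨hx1, hx2⟩, hxS⟩
      rw [eq_empty_iff_forall_notMem] at hgap''
      exact hgap'' x ⟨⟨by linarith, hx2⟩, hxS⟩
    have := le_csSup hRbdd hb'R
    linarith


lemma Ik_lt (k : ℕ) : (1:ℝ)/5^k < 5/4/5^k := by
  have hq : (0:ℝ) < 5^k := by positivity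
  rw [div_lt_div_iff₀ hq hq]
  nlinarith

lemma pow5_ge (k : ℕ) : (5:ℝ) ≤ 5^(k+1) := by
  calc (5:ℝ) = 5^1 := (pow_one 5).symm
  _ ≤ 5^(k+1) := by apply pow_le_pow_right₀ (by norm_num) (by omega)

lemma maxIntervals_infinite :
    {p : ℝ × ℝ | IsMaxInterval SS p.1 p.2}.Infinite := by
  have hMI : ∀ k : ℕ, ∃ p : ℝ × ℝ, IsMaxInterval SS p.1 p.2 ∧
      p.1 ≤ 1/5^k ∧ 5/4/5^k ≤ p.2 := by
    intro k
    obtain ⟨a', b', ha, hb, hmax⟩ :=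
      exists_maxInterval SS_closed SS_subset_Icc (Ik_lt k) (Ik_subset k)
    exact ⟨(a', b'), hmax, ha, hb⟩
  choose f hf1 hf2 hf3 using hMI
  have hdec : ∀ k : ℕ, (f (k+1)).2 < (f k).2 := by
    intro k
    have hq : (0:ℝ) < 5^k := by positivity
    have h1 : (f (k+1)).2 < (7/10)/5^k := by
      by_contra h
      push_neg at h
      apply not_mem_u k
      apply (hf1 (k+1)).2.1
      constructor
      · calc (f (k+1)).1 ≤ 1/5^(k+1) := hf2 (k+1)
        _ ≤ 7/10/5^k := by
            rw [pow_succ, div_le_div_iff₀ (by positivity) hq]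
            nlinarith
      · exact h
    have h2 : (5/4)/5^k ≤ (f k).2 := hf3 k
    have h3 : (7:ℝ)/10/5^k < 5/4/5^k := by
      rw [div_lt_div_iff₀ hq hq]
      nlinarith
    linarith
  have hanti : StrictAnti (fun k => (f k).2) := strictAnti_nat_of_succ_lt hdec
  have hinj : Function.Injective f := by
    intro i j hij
    exact hanti.injective (congrArg Prod.snd hij)
  exact Set.infinite_of_injective_forall_mem hinj (fun k => hf1 k)

lemma maxGaps_infinite :
    {p : ℝ × ℝ | IsMaxGap SS p.1 p.2}.Infinite := by
  have hMG : ∀ k : ℕ, ∃ p : ℝ × ℝ, IsMaxGap SS p.1 p.2 ∧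
      p.2 = 2 - 2/5^(k+1) := by
    intro k
    have hq : (0:ℝ) < 5^(k+1) := by positivity
    have hq5 := pow5_ge k
    have h3q : (3:ℝ)/5^(k+1) ≤ 3/5 := by
      rw [div_le_div_iff₀ hq (by norm_num)]
      nlinarith
    have h2q : (0:ℝ) < 2/5^(k+1) := by positivity
    have h3q2 : (2:ℝ)/5^(k+1) < 3/5^(k+1) := by
      rw [div_lt_div_iff₀ hq hq]
      nlinarith
    have h0 : (0:ℝ) ≤ 2 - 3/5^(k+1) := by linarith
    have hab : (2:ℝ) - 3/5^(k+1) < 2 - 2/5^(k+1) := by linarith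
    have hb2 : (2:ℝ) - 2/5^(k+1) ≤ 2 := by linarith
    have hgap : Ioo ((2:ℝ) - 3/5^(k+1)) (2 - 2/5^(k+1)) ∩ SS = ∅ := by
      rw [eq_empty_iff_forall_notMem]
      rintro x ⟨hIoo, hS⟩
      exact gap_top k x hS hIoo
    obtain ⟨a', b', ha, hb, hmax⟩ := exists_maxGap h0 hab hb2 hgap
    have hs := mem_s (k+1)
    have hb'le : b' ≤ 2 - 2/5^(k+1) := by
      by_contra h
      push_neg at h
      have hmem : (2 - 2/5^(k+1) : ℝ) ∈ Ioo a' b' ∩ SS :=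
        ⟨⟨by linarith, h⟩, hs⟩
      rw [hmax.2.1] at hmem
      exact hmem
    have hbeq : b' = 2 - 2/5^(k+1) := le_antisymm hb'le hb
    exact ⟨(a', b'), hmax, hbeq⟩
  choose g hg1 hg2 using hMG
  have hmono : ∀ k : ℕ, (g k).2 < (g (k+1)).2 := by
    intro k
    rw [hg2 k, hg2 (k+1)]
    have hq : (0:ℝ) < 5^(k+1) := by positivity
    have hq2 : (0:ℝ) < 5^(k+2) := by positivity
    have : (2:ℝ)/5^(k+2) < 2/5^(k+1) := by
      rw [div_lt_div_iff₀ hq2 hq]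
      have : (5:ℝ)^(k+2) = 5^(k+1) * 5 := by rw [pow_succ]
      nlinarith
    linarith
  have hmono' : StrictMono (fun k => (g k).2) := strictMono_nat_of_lt_succ hmono
  have hinj : Function.Injective g := by
    intro i j hij
    exact hmono'.injective (congrArg Prod.snd hij)
  exact Set.infinite_of_injective_forall_mem hinj (fun k => hg1 k)

end
end S014

/-- For `A = {0,1,4}`, `n = 5`: `[1, 5/4] ⊆ C_A + C_A`, and `C_A + C_A` has
infinitely many maximal intervals and infinitely many maximal gaps. -/
theorem structure_014 :
    Set.Icc (1 : ℝ) (5 / 4) ⊆ linCantor 5 {0, 1, 4} + linCantor 5 {0, 1, 4} ∧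
    {p : ℝ × ℝ |
      IsMaxInterval (linCantor 5 {0, 1, 4} + linCantor 5 {0, 1, 4}) p.1 p.2}.Infinite ∧
    {p : ℝ × ℝ |
      IsMaxGap (linCantor 5 {0, 1, 4} + linCantor 5 {0, 1, 4}) p.1 p.2}.Infinite :=
  ⟨S014.part1, S014.maxIntervals_infinite, S014.maxGaps_infinite⟩
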